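/- Let n ≥ 2k ≥ 4, 4 ≤ b ≤ k+1, and let d ≥ 1 with d ≤ n − 2 (X ⊆ [2,n], |X| = d). Then the quantity [C(n−b, k−b+1) − C(n−b−d, k−b+1)] − [C(n−b, k−1) − C(n−b−d, k−1)] is nonpositive. Equivalently, for A = F([2,b]) ∪ F({1,b}) and any X ⊆ [2,n] with |X| = d disjoint from [2,b], |A(X)| ≤ |S(X)| where S is the star family {S ∈ C([n],k) : 1 ∈ S} and A(X) = {A ∈ A : A ∩ X ≠ ∅}. -/

import Mathlib

/-- The `i`-th smallest element (0-indexed) of a finite set of naturals. -/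
def nth (A : Finset ℕ) (i : ℕ) : ℕ := (A.sort (· ≤ ·)).getD i 0

lemma choose_mono_mid {j a c : ℕ} (hac : a ≤ c) (hsum : a + c ≤ j) :
    Nat.choose j a ≤ Nat.choose j c := by
  set t := min c (j - c) with ht
  have hcj : c ≤ j := le_trans (Nat.le_add_left _ _) hsum
  have hat : a ≤ t := le_min hac (by omega)
  have h2t : 2 * t ≤ j := by
    have h1 : t ≤ c := min_le_left _ _
    have h2 : t ≤ j - c := min_le_right _ _
    omega
  have htc : Nat.choose j t = Nat.choose j c := by
    rcases min_cases c (j - c) with ⟨h1, _⟩ | ⟨h1, _⟩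
    · rw [ht, h1]
    · rw [ht, h1, Nat.choose_symm hcj]
  have key : ∀ x, a ≤ x → x ≤ t → Nat.choose j a ≤ Nat.choose j x := by
    intro x
    induction x with
    | zero => intro h1 _; interval_cases a; exact le_refl _
    | succ y ih =>
      intro h1 h2
      rcases Nat.lt_or_ge a (y+1) with h3 | h3
      · have hy : Nat.choose j a ≤ Nat.choose j y := ih (by omega) (by omega)
        refine le_trans hy (Nat.choose_le_succ_of_lt_half_left ?_)
        omega
      · have : a = y + 1 := by omega
        rw [this]
  calc Nat.choose j a ≤ Nat.choose j t := key t hat le_rfl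
    _ = Nat.choose j c := htc

lemma exchange {m m' a c : ℕ} (hm : m' ≤ m) (hac : a ≤ c) (hsum : a + c ≤ m) :
    Nat.choose m a + Nat.choose m' c ≤ Nat.choose m c + Nat.choose m' a := by
  induction m with
  | zero =>
    have : m' = 0 := by omega
    subst this; omega
  | succ N ih =>
    rcases Nat.lt_or_ge N m' with h1 | h1
    · have : m' = N + 1 := by omega
      subst this; omega
    rcases Nat.lt_or_ge (a + c) (N + 1) with h2 | h2
    · rcases Nat.eq_zero_or_pos a with ha | ha
      · subst ha
        simp only [Nat.choose_zero_right]
        have h3 : Nat.choose m' c ≤ Nat.choose (N+1) c := Nat.choose_le_choose c hm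
        have h4 : 1 ≤ Nat.choose (N+1) c := Nat.choose_pos (by omega)
        omega
      · have hIH := ih h1 (by omega)
        have hstep : Nat.choose N (a-1) ≤ Nat.choose N (c-1) :=
          choose_mono_mid (by omega) (by omega)
        obtain ⟨p, rfl⟩ : ∃ p, a = p + 1 := ⟨a - 1, by omega⟩
        obtain ⟨q, rfl⟩ : ∃ q, c = q + 1 := ⟨c - 1, by omega⟩
        have e1 : Nat.choose (N+1) (p+1) = Nat.choose N p + Nat.choose N (p+1) :=
          Nat.choose_succ_succ N p
        have e2 : Nat.choose (N+1) (q+1) = Nat.choose N q + Nat.choose N (q+1) :=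
          Nat.choose_succ_succ N q
        simp only [Nat.add_sub_cancel] at hstep
        omega
    · have hacm : a + c = N + 1 := by omega
      have e1 : Nat.choose (N+1) a = Nat.choose (N+1) c := by
        rw [← Nat.choose_symm (by omega : c ≤ N+1)]
        congr 1; omega
      have h3 : Nat.choose m' c ≤ Nat.choose m' a := by
        rcases Nat.lt_or_ge m' c with h4 | h4
        · rw [Nat.choose_eq_zero_of_lt h4]; exact Nat.zero_le _
        · calc Nat.choose m' c = Nat.choose m' (m' - c) := (Nat.choose_symm h4).symm
            _ ≤ Nat.choose m' a := choose_mono_mid (by omega) (by omega)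
      omega

lemma sorted_getElem_le_iff {l : List ℕ} (hs : l.Pairwise (· ≤ ·)) {j v : ℕ} (hj : j < l.length) :
    l[j] ≤ v ↔ j < l.countP (fun x => decide (x ≤ v)) := by
  have hmono : ∀ i₁ i₂ (h1 : i₁ < l.length) (h2 : i₂ < l.length), i₁ ≤ i₂ → l[i₁] ≤ l[i₂] := by
    intro i₁ i₂ h1 h2 h
    rcases eq_or_lt_of_le h with rfl | h
    · exact le_rfl
    · exact List.pairwise_iff_getElem.mp hs _ _ h1 h2 h
  set p : ℕ → Bool := fun x => decide (x ≤ v) with hp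
  constructor
  · intro h
    have hsub : (l.take (j+1)).Sublist l := List.take_sublist _ _
    have hlen : (l.take (j+1)).length = j+1 := by rw [List.length_take]; omega
    have hall : ∀ x ∈ l.take (j+1), p x = true := by
      intro x hx
      obtain ⟨i, hi, rfl⟩ := List.mem_iff_getElem.mp hx
      rw [List.getElem_take]
      have hi' : i ≤ j := by rw [hlen] at hi; omega
      simp only [hp, decide_eq_true_iff]
      exact le_trans (hmono i j (by omega) hj hi') h
    have hc1 : (l.take (j+1)).countP p = j + 1 := by
      rw [List.countP_eq_length.mpr hall, hlen]
    have hc2 := hsub.countP_le (p := p)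
    omega
  · intro h
    by_contra hvl
    push_neg at hvl
    have hsplit : l.countP p = (l.take j).countP p + (l.drop j).countP p := by
      conv_lhs => rw [← List.take_append_drop j l]
      rw [List.countP_append]
    have hdrop : (l.drop j).countP p = 0 := by
      rw [List.countP_eq_zero]
      intro a ha
      obtain ⟨i, hi, rfl⟩ := List.mem_iff_getElem.mp ha
      rw [List.getElem_drop]
      simp only [hp, decide_eq_true_iff, not_le]
      have : j + i < l.length := by rw [List.length_drop] at hi; omega
      exact lt_of_lt_of_le hvl (hmono j (j+i) hj this (by omega))
    have htake : (l.take j).countP p ≤ j := by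
      have := List.countP_le_length (p := p) (l := l.take j)
      rw [List.length_take] at this
      omega
    omega

lemma card_filter_eq_countP (S : Finset ℕ) (p : ℕ → Prop) [DecidablePred p] :
    (S.filter p).card = (S.sort (· ≤ ·)).countP (fun x => decide (p x)) := by
  have h1 : (S.filter p).card = Multiset.countP p S.1 := by
    rw [Multiset.countP_eq_card_filter]; rfl
  rw [h1, ← Finset.sort_eq (s := S) (r := (· ≤ ·)), Multiset.coe_countP]

lemma nth_le_iff {S : Finset ℕ} {j v : ℕ} (hj : j < S.card) :
    nth S j ≤ v ↔ j < (S.filter (· ≤ v)).card := by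
  have hj' : j < (S.sort (· ≤ ·)).length := by rw [Finset.length_sort]; exact hj
  have : nth S j = (S.sort (· ≤ ·))[j] := List.getD_eq_getElem _ _ hj'
  rw [this, card_filter_eq_countP]
  exact sorted_getElem_le_iff (Finset.pairwise_sort _ _) hj'

lemma nth_mem {S : Finset ℕ} {j : ℕ} (hj : j < S.card) : nth S j ∈ S := by
  have hj' : j < (S.sort (· ≤ ·)).length := by rw [Finset.length_sort]; exact hj
  have : nth S j = (S.sort (· ≤ ·))[j] := List.getD_eq_getElem _ _ hj'
  rw [this, ← Finset.mem_sort (r := (· ≤ ·))]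
  exact List.getElem_mem hj'

lemma pred_char {n k b : ℕ} (hk : 2 ≤ k) (hb : 4 ≤ b) (hbk : b ≤ k + 1)
    {S : Finset ℕ} (hS : S ⊆ Finset.Icc 1 n) (hcard : S.card = k) :
    ((∀ j < b - 1, nth S j ≤ j + 2) ∨ (nth S 0 = 1 ∧ nth S 1 ≤ b)) ↔
    ((1 ∈ S ∧ (S ∩ Finset.Icc 2 b).Nonempty) ∨ (1 ∉ S ∧ Finset.Icc 2 b ⊆ S)) := by
  have hS1 : ∀ x ∈ S, 1 ≤ x := fun x hx => (Finset.mem_Icc.mp (hS hx)).1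
  have key : nth S 1 ≤ b → (S ∩ Finset.Icc 2 b).Nonempty := by
    intro h3
    have hcf : 1 < (S.filter (· ≤ b)).card := (nth_le_iff (by omega)).mp h3
    obtain ⟨x, hx, y, hy, hxy⟩ := Finset.one_lt_card.mp hcf
    have hz : ∃ z ∈ S.filter (· ≤ b), z ≠ 1 := by
      rcases eq_or_ne x 1 with rfl | hx1
      · exact ⟨y, hy, fun h => hxy h.symm⟩
      · exact ⟨x, hx, hx1⟩
    obtain ⟨z, hz1, hz2⟩ := hz
    rw [Finset.mem_filter] at hz1
    refine ⟨z, Finset.mem_inter.mpr ⟨hz1.1, Finset.mem_Icc.mpr ⟨?_, hz1.2⟩⟩⟩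
    have := hS1 z hz1.1
    omega
  constructor
  · rintro (h1 | ⟨h20, h21⟩)
    · by_cases hmem : 1 ∈ S
      · exact Or.inl ⟨hmem, key (le_trans (h1 1 (by omega)) (by omega))⟩
      · refine Or.inr ⟨hmem, ?_⟩
        have hc : b - 2 < (S.filter (· ≤ b)).card := by
          have h4 : nth S (b-2) ≤ b - 2 + 2 := h1 (b-2) (by omega)
          have h5 : nth S (b-2) ≤ b := by omega
          exact (nth_le_iff (by omega)).mp h5
        have hsub : S.filter (· ≤ b) ⊆ Finset.Icc 2 b := by
          intro x hx
          rw [Finset.mem_filter] at hx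
          have h6 := hS1 x hx.1
          have h7 : x ≠ 1 := fun h => hmem (h ▸ hx.1)
          exact Finset.mem_Icc.mpr ⟨by omega, hx.2⟩
        have heq : S.filter (· ≤ b) = Finset.Icc 2 b :=
          Finset.eq_of_subset_of_card_le hsub (by rw [Nat.card_Icc]; omega)
        intro x hx
        rw [← heq] at hx
        exact (Finset.mem_filter.mp hx).1
    · exact Or.inl ⟨h20 ▸ nth_mem (by omega), key h21⟩
  · rintro (⟨hmem, x, hx⟩ | ⟨hmem, hsub⟩)
    · rw [Finset.mem_inter, Finset.mem_Icc] at hx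
      refine Or.inr ⟨?_, ?_⟩
      · have h1 : nth S 0 ≤ 1 := by
          refine (nth_le_iff (by omega)).mpr ?_
          exact Finset.card_pos.mpr ⟨1, Finset.mem_filter.mpr ⟨hmem, le_rfl⟩⟩
        have h2 := hS1 _ (nth_mem (j := 0) (by omega))
        omega
      · refine (nth_le_iff (by omega)).mpr ?_
        refine Finset.one_lt_card.mpr ⟨1, Finset.mem_filter.mpr ⟨hmem, by omega⟩,
          x, Finset.mem_filter.mpr ⟨hx.1, hx.2.2⟩, by omega⟩
    · refine Or.inl fun j hj => ?_
      refine (nth_le_iff (by omega)).mpr ?_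
      have h1 : Finset.Icc 2 (j+2) ⊆ S.filter (· ≤ j+2) := by
        intro x hx
        rw [Finset.mem_Icc] at hx
        exact Finset.mem_filter.mpr
          ⟨hsub (Finset.mem_Icc.mpr ⟨hx.1, by omega⟩), hx.2⟩
      calc j < (Finset.Icc 2 (j+2)).card := by rw [Nat.card_Icc]; omega
        _ ≤ _ := Finset.card_le_card h1

lemma count_meet (U X : Finset ℕ) (a : ℕ) (hXU : X ⊆ U) :
    ((U.powersetCard a).filter (fun T => (T ∩ X).Nonempty)).card
      + Nat.choose (U.card - X.card) a = Nat.choose U.card a := by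
  have hsplit := Finset.card_filter_add_card_filter_not
    (s := U.powersetCard a) (p := fun T => (T ∩ X).Nonempty)
  have heq : (U.powersetCard a).filter (fun T => ¬(T ∩ X).Nonempty) = (U \ X).powersetCard a := by
    ext T
    simp only [Finset.mem_filter, Finset.mem_powersetCard, Finset.subset_sdiff,
      Finset.not_nonempty_iff_eq_empty, ← Finset.disjoint_iff_inter_eq_empty]
    tauto
  rw [heq, Finset.card_powersetCard, Finset.card_sdiff_of_subset hXU] at hsplit
  rw [← Finset.card_powersetCard a U, ← hsplit]

/-- [C(n-b,k-b+1) - C(n-b-d,k-b+1)] - [C(n-b,k-1) - C(n-b-d,k-1)] ≤ 0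
(stated subtraction-free over ℕ), and consequently |A(X)| ≤ |S(X)| for every
X ⊆ [2,n] with |X| = d disjoint from [2,b], where A = F([2,b]) ∪ F(1,b)
and S is the star. -/
theorem stmt_17 (n k b d : ℕ) (hn : 2 * k ≤ n) (hk : 2 ≤ k)
    (hb : 4 ≤ b) (hbk : b ≤ k + 1) (hd : 1 ≤ d) (hdn : d ≤ n - 2) :
    (Nat.choose (n - b) (k + 1 - b) + Nat.choose (n - b - d) (k - 1)
      ≤ Nat.choose (n - b) (k - 1) + Nat.choose (n - b - d) (k + 1 - b))
    ∧ ∀ X : Finset ℕ, X ⊆ Finset.Icc 2 n → X.card = d →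
        X ∩ Finset.Icc 2 b = ∅ →
        ((Finset.Icc 1 n).powerset.filter
          (fun S => S.card = k ∧
            ((∀ j < b - 1, nth S j ≤ j + 2) ∨ (nth S 0 = 1 ∧ nth S 1 ≤ b)) ∧
            (S ∩ X).Nonempty)).card
        ≤ ((Finset.Icc 1 n).powerset.filter
            (fun S => S.card = k ∧ 1 ∈ S ∧ (S ∩ X).Nonempty)).card := by
  have hL : Nat.choose (n - b) (k + 1 - b) + Nat.choose (n - b - d) (k - 1)
      ≤ Nat.choose (n - b) (k - 1) + Nat.choose (n - b - d) (k + 1 - b) :=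
    exchange (by omega) (by omega) (by omega)
  refine ⟨hL, ?_⟩
  intro X hX hXcard hXb
  have hX1 : 1 ∉ X := fun h => by
    have := Finset.mem_Icc.mp (hX h); omega
  have hXV : X ⊆ Finset.Icc (b+1) n := by
    intro x hx
    have h1 := Finset.mem_Icc.mp (hX hx)
    have h2 : x ∉ Finset.Icc 2 b := fun h => by
      have : x ∈ X ∩ Finset.Icc 2 b := Finset.mem_inter.mpr ⟨hx, h⟩
      rw [hXb] at this
      exact absurd this (Finset.notMem_empty x)
    rw [Finset.mem_Icc] at h2
    exact Finset.mem_Icc.mpr ⟨by omega, h1.2⟩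
  have hXIcc2 : ∀ x ∈ X, x ∉ Finset.Icc 2 b := by
    intro x hx h
    have : x ∈ X ∩ Finset.Icc 2 b := Finset.mem_inter.mpr ⟨hx, h⟩
    rw [hXb] at this
    exact absurd this (Finset.notMem_empty x)
  set V := Finset.Icc (b+1) n with hV
  have hVcard : V.card = n - b := by rw [hV, Nat.card_Icc]; omega
  -- RHS count
  have hRHS : ((Finset.Icc 1 n).powerset.filter
      (fun S => S.card = k ∧ 1 ∈ S ∧ (S ∩ X).Nonempty)).card
      = (((Finset.Icc 2 n).powersetCard (k-1)).filter (fun T => (T ∩ X).Nonempty)).card := by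
    apply Finset.card_nbij' (fun S => S.erase 1) (fun R => insert 1 R)
    · intro S hS
      simp only [Finset.mem_coe, Finset.mem_filter, Finset.mem_powerset] at hS
      obtain ⟨hSsub, hSc, hS1, y, hy⟩ := hS
      simp only [Finset.mem_coe, Finset.mem_filter, Finset.mem_powersetCard]
      refine ⟨⟨?_, by rw [Finset.card_erase_of_mem hS1, hSc]⟩, ?_⟩
      · intro x hx
        rw [Finset.mem_erase] at hx
        have := Finset.mem_Icc.mp (hSsub hx.2)
        exact Finset.mem_Icc.mpr ⟨by omega, this.2⟩
      · rw [Finset.mem_inter] at hy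
        exact ⟨y, Finset.mem_inter.mpr
          ⟨Finset.mem_erase.mpr ⟨fun h => hX1 (h ▸ hy.2), hy.1⟩, hy.2⟩⟩
    · intro R hR
      simp only [Finset.mem_coe, Finset.mem_filter, Finset.mem_powersetCard] at hR
      obtain ⟨⟨hRsub, hRc⟩, y, hy⟩ := hR
      have h1R : 1 ∉ R := fun h => by
        have := Finset.mem_Icc.mp (hRsub h); omega
      simp only [Finset.mem_coe, Finset.mem_filter, Finset.mem_powerset]
      refine ⟨?_, by rw [Finset.card_insert_of_notMem h1R, hRc]; omega, Finset.mem_insert_self _ _, ?_⟩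
      · intro x hx
        rcases Finset.mem_insert.mp hx with rfl | hx
        · exact Finset.mem_Icc.mpr ⟨le_rfl, by omega⟩
        · have := Finset.mem_Icc.mp (hRsub hx)
          exact Finset.mem_Icc.mpr ⟨by omega, this.2⟩
      · rw [Finset.mem_inter] at hy
        exact ⟨y, Finset.mem_inter.mpr ⟨Finset.mem_insert_of_mem hy.1, hy.2⟩⟩
    · intro S hS
      simp only [Finset.mem_coe, Finset.mem_filter, Finset.mem_powerset] at hS
      exact Finset.insert_erase hS.2.2.1
    · intro R hR
      simp only [Finset.mem_coe, Finset.mem_filter, Finset.mem_powersetCard] at hR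
      have h1R : 1 ∉ R := fun h => by
        have := Finset.mem_Icc.mp (hR.1.1 h); omega
      exact Finset.erase_insert h1R
  -- LHS rewrite
  have hLHSrw : (Finset.Icc 1 n).powerset.filter
      (fun S => S.card = k ∧
        ((∀ j < b - 1, nth S j ≤ j + 2) ∨ (nth S 0 = 1 ∧ nth S 1 ≤ b)) ∧
        (S ∩ X).Nonempty)
      = (Finset.Icc 1 n).powerset.filter
        (fun S => (S.card = k ∧ (1 ∈ S ∧ (S ∩ Finset.Icc 2 b).Nonempty) ∧ (S ∩ X).Nonempty)
          ∨ (S.card = k ∧ (1 ∉ S ∧ Finset.Icc 2 b ⊆ S) ∧ (S ∩ X).Nonempty)) := by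
    apply Finset.filter_congr
    intro S hS
    rw [Finset.mem_powerset] at hS
    constructor
    · rintro ⟨h1, h2, h3⟩
      rcases (pred_char hk hb hbk hS h1).mp h2 with h | h
      · exact Or.inl ⟨h1, h, h3⟩
      · exact Or.inr ⟨h1, h, h3⟩
    · rintro (⟨h1, h2, h3⟩ | ⟨h1, h2, h3⟩)
      · exact ⟨h1, (pred_char hk hb hbk hS h1).mpr (Or.inl h2), h3⟩
      · exact ⟨h1, (pred_char hk hb hbk hS h1).mpr (Or.inr h2), h3⟩
  rw [hLHSrw, Finset.filter_or, Finset.card_union_of_disjoint (by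
    rw [Finset.disjoint_left]
    intro S h1 h2
    rw [Finset.mem_filter] at h1 h2
    exact h2.2.2.1.1 h1.2.2.1.1)]
  have hbn : b ≤ n := by omega
  -- card of the 1 ∈ S part
  have hcard1 : ((Finset.Icc 1 n).powerset.filter
      (fun S => S.card = k ∧ (1 ∈ S ∧ (S ∩ Finset.Icc 2 b).Nonempty) ∧ (S ∩ X).Nonempty)).card
      = (((Finset.Icc 2 n).powersetCard (k-1)).filter
          (fun T => (T ∩ X).Nonempty ∧ (T ∩ Finset.Icc 2 b).Nonempty)).card := by
    apply Finset.card_nbij' (fun S => S.erase 1) (fun R => insert 1 R)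
    · intro S hS
      simp only [Finset.mem_coe, Finset.mem_filter, Finset.mem_powerset] at hS
      obtain ⟨hSsub, hSc, ⟨hS1, z, hz⟩, y, hy⟩ := hS
      simp only [Finset.mem_coe, Finset.mem_filter, Finset.mem_powersetCard]
      rw [Finset.mem_inter] at hy hz
      have hz2 := Finset.mem_Icc.mp hz.2
      refine ⟨⟨?_, by rw [Finset.card_erase_of_mem hS1, hSc]⟩, ?_, ?_⟩
      · intro x hx
        rw [Finset.mem_erase] at hx
        have := Finset.mem_Icc.mp (hSsub hx.2)
        exact Finset.mem_Icc.mpr ⟨by omega, this.2⟩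
      · exact ⟨y, Finset.mem_inter.mpr
          ⟨Finset.mem_erase.mpr ⟨fun h => hX1 (h ▸ hy.2), hy.1⟩, hy.2⟩⟩
      · exact ⟨z, Finset.mem_inter.mpr
          ⟨Finset.mem_erase.mpr ⟨by omega, hz.1⟩, hz.2⟩⟩
    · intro R hR
      simp only [Finset.mem_coe, Finset.mem_filter, Finset.mem_powersetCard] at hR
      obtain ⟨⟨hRsub, hRc⟩, ⟨y, hy⟩, z, hz⟩ := hR
      have h1R : 1 ∉ R := fun h => by
        have := Finset.mem_Icc.mp (hRsub h); omega
      rw [Finset.mem_inter] at hy hz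
      simp only [Finset.mem_coe, Finset.mem_filter, Finset.mem_powerset]
      refine ⟨?_, by rw [Finset.card_insert_of_notMem h1R, hRc]; omega,
        ⟨Finset.mem_insert_self _ _, z, Finset.mem_inter.mpr ⟨Finset.mem_insert_of_mem hz.1, hz.2⟩⟩,
        y, Finset.mem_inter.mpr ⟨Finset.mem_insert_of_mem hy.1, hy.2⟩⟩
      intro x hx
      rcases Finset.mem_insert.mp hx with rfl | hx
      · exact Finset.mem_Icc.mpr ⟨le_rfl, by omega⟩
      · have := Finset.mem_Icc.mp (hRsub hx)
        exact Finset.mem_Icc.mpr ⟨by omega, this.2⟩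
    · intro S hS
      simp only [Finset.mem_coe, Finset.mem_filter, Finset.mem_powerset] at hS
      exact Finset.insert_erase hS.2.2.1.1
    · intro R hR
      simp only [Finset.mem_coe, Finset.mem_filter, Finset.mem_powersetCard] at hR
      have h1R : 1 ∉ R := fun h => by
        have := Finset.mem_Icc.mp (hR.1.1 h); omega
      exact Finset.erase_insert h1R
  -- card of the 1 ∉ S part
  have hcard2 : ((Finset.Icc 1 n).powerset.filter
      (fun S => S.card = k ∧ (1 ∉ S ∧ Finset.Icc 2 b ⊆ S) ∧ (S ∩ X).Nonempty)).card
      = ((V.powersetCard (k+1-b)).filter (fun T => (T ∩ X).Nonempty)).card := by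
    apply Finset.card_nbij' (fun S => S \ Finset.Icc 2 b) (fun T => T ∪ Finset.Icc 2 b)
    · intro S hS
      simp only [Finset.mem_coe, Finset.mem_filter, Finset.mem_powerset] at hS
      obtain ⟨hSsub, hSc, ⟨hS1, hIS⟩, y, hy⟩ := hS
      rw [Finset.mem_inter] at hy
      simp only [Finset.mem_coe, Finset.mem_filter, Finset.mem_powersetCard]
      refine ⟨⟨?_, ?_⟩, ?_⟩
      · intro x hx
        rw [Finset.mem_sdiff, Finset.mem_Icc] at hx
        have h1 := Finset.mem_Icc.mp (hSsub hx.1)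
        have h2 : x ≠ 1 := fun h => hS1 (h ▸ hx.1)
        exact Finset.mem_Icc.mpr ⟨by omega, h1.2⟩
      · rw [Finset.card_sdiff_of_subset hIS, hSc, Nat.card_Icc]; omega
      · exact ⟨y, Finset.mem_inter.mpr
          ⟨Finset.mem_sdiff.mpr ⟨hy.1, hXIcc2 y hy.2⟩, hy.2⟩⟩
    · intro T hT
      simp only [Finset.mem_coe, Finset.mem_filter, Finset.mem_powersetCard] at hT
      obtain ⟨⟨hTsub, hTc⟩, y, hy⟩ := hT
      rw [Finset.mem_inter] at hy
      have hTge : ∀ x ∈ T, b + 1 ≤ x ∧ x ≤ n := fun x hx => Finset.mem_Icc.mp (hTsub hx)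
      have hdisjT : Disjoint T (Finset.Icc 2 b) := by
        rw [Finset.disjoint_left]
        intro x hx hx2
        have h1 := hTge x hx
        have h2 := Finset.mem_Icc.mp hx2
        omega
      simp only [Finset.mem_coe, Finset.mem_filter, Finset.mem_powerset]
      refine ⟨?_, ?_, ⟨?_, Finset.subset_union_right⟩, ?_⟩
      · intro x hx
        rcases Finset.mem_union.mp hx with hx | hx
        · have := hTge x hx
          exact Finset.mem_Icc.mpr ⟨by omega, this.2⟩
        · have := Finset.mem_Icc.mp hx
          exact Finset.mem_Icc.mpr ⟨by omega, by omega⟩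
      · rw [Finset.card_union_of_disjoint hdisjT, hTc, Nat.card_Icc]; omega
      · intro h
        rcases Finset.mem_union.mp h with h | h
        · have := hTge 1 h; omega
        · have := Finset.mem_Icc.mp h; omega
      · exact ⟨y, Finset.mem_inter.mpr ⟨Finset.mem_union_left _ hy.1, hy.2⟩⟩
    · intro S hS
      simp only [Finset.mem_coe, Finset.mem_filter, Finset.mem_powerset] at hS
      exact Finset.sdiff_union_of_subset hS.2.2.1.2
    · intro T hT
      simp only [Finset.mem_coe, Finset.mem_filter, Finset.mem_powersetCard] at hT
      have hdisjT : Disjoint T (Finset.Icc 2 b) := by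
        rw [Finset.disjoint_left]
        intro x hx hx2
        have h1 := Finset.mem_Icc.mp (hT.1.1 hx)
        have h2 := Finset.mem_Icc.mp hx2
        omega
      beta_reduce
      rw [Finset.union_sdiff_right, Finset.sdiff_eq_self_iff_disjoint.mpr hdisjT]
  -- split the RHS count
  have hRsplit : (((Finset.Icc 2 n).powersetCard (k-1)).filter
        (fun T => (T ∩ X).Nonempty ∧ (T ∩ Finset.Icc 2 b).Nonempty)).card
      + ((V.powersetCard (k-1)).filter (fun T => (T ∩ X).Nonempty)).card
      = (((Finset.Icc 2 n).powersetCard (k-1)).filter (fun T => (T ∩ X).Nonempty)).card := by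
    have hsplit := Finset.card_filter_add_card_filter_not
      (s := ((Finset.Icc 2 n).powersetCard (k-1)).filter (fun T => (T ∩ X).Nonempty))
      (p := fun T => (T ∩ Finset.Icc 2 b).Nonempty)
    rw [Finset.filter_filter, Finset.filter_filter] at hsplit
    have heq2 : ((Finset.Icc 2 n).powersetCard (k-1)).filter
        (fun T => (T ∩ X).Nonempty ∧ ¬(T ∩ Finset.Icc 2 b).Nonempty)
        = (V.powersetCard (k-1)).filter (fun T => (T ∩ X).Nonempty) := by
      ext T
      simp only [Finset.mem_filter, Finset.mem_powersetCard,
        Finset.not_nonempty_iff_eq_empty, ← Finset.disjoint_iff_inter_eq_empty]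
      constructor
      · rintro ⟨⟨h1, h2⟩, h3, h4⟩
        refine ⟨⟨?_, h2⟩, h3⟩
        intro x hx
        have ha := Finset.mem_Icc.mp (h1 hx)
        have hb2 : x ∉ Finset.Icc 2 b := Finset.disjoint_left.mp h4 hx
        rw [Finset.mem_Icc] at hb2
        exact Finset.mem_Icc.mpr ⟨by omega, ha.2⟩
      · rintro ⟨⟨h1, h2⟩, h3⟩
        refine ⟨⟨?_, h2⟩, h3, ?_⟩
        · intro x hx
          have := Finset.mem_Icc.mp (h1 hx)
          exact Finset.mem_Icc.mpr ⟨by omega, this.2⟩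
        · rw [Finset.disjoint_left]
          intro x hx hx2
          have := Finset.mem_Icc.mp (h1 hx)
          have := Finset.mem_Icc.mp hx2
          omega
    rw [heq2] at hsplit
    exact hsplit
  rw [hcard1, hcard2, hRHS, ← hRsplit]
  have hm1 := count_meet V X (k+1-b) hXV
  have hm2 := count_meet V X (k-1) hXV
  rw [hVcard, hXcard] at hm1 hm2
  omega
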